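/- Let G be a graph with a cluster vertex deletion set of size at most k (i.e., a set X of at most k vertices such that G−X is a disjoint union of cliques). Then every connected component of G has diameter at most 3k+1. -/
import Mathlib

open SimpleGraph Walk

private lemma exists_take {V : Type*} {G : SimpleGraph V} {u v : V} (p : G.Walk u v) :
    ∀ n, n ≤ p.length → ∃ q : G.Walk u (p.getVert n), q.length = n := by
  induction p with
  | nil => intro n hn; simp at hn; subst hn; exact ⟨Walk.nil, rfl⟩
  | cons h q ih =>
    intro n hn
    cases n with
    | zero => exact ⟨Walk.nil.copy rfl ((Walk.cons h q).getVert_zero).symm, by simp⟩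
    | succ n =>
      obtain ⟨r, hr⟩ := ih n (by simpa using hn)
      exact ⟨Walk.cons h (r.copy rfl rfl), by simp [hr]⟩

private lemma exists_drop {V : Type*} {G : SimpleGraph V} {u v : V} (p : G.Walk u v) :
    ∀ n, ∃ q : G.Walk (p.getVert n) v, q.length = p.length - n := by
  induction p with
  | nil => intro n; exact ⟨(Walk.nil).copy (Walk.getVert_of_length_le _ (Nat.zero_le _)).symm rfl, by simp⟩
  | cons h q ih =>
    intro n
    cases n with
    | zero =>
      exact ⟨(Walk.cons h q).copy (Walk.getVert_zero _).symm rfl, by simp⟩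
    | succ n =>
      obtain ⟨r, hr⟩ := ih n
      exact ⟨r.copy (Walk.getVert_cons_succ _ _).symm rfl, by simp [hr]⟩

private lemma getVert_inj {V : Type*} {G : SimpleGraph V} {u v : V} {p : G.Walk u v}
    (hp : p.IsPath) : ∀ i j, i ≤ p.length → j ≤ p.length →
      p.getVert i = p.getVert j → i = j := by
  induction p with
  | nil => intro i j hi hj _; simp at hi hj; omega
  | cons h q ih =>
    rw [Walk.cons_isPath_iff] at hp
    intro i j hi hj hij
    match i, j with
    | 0, 0 => rfl
    | 0, j + 1 =>
      exfalso
      apply hp.2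
      rw [Walk.mem_support_iff_exists_getVert]
      exact ⟨j, by simpa [Walk.getVert_cons_succ] using hij.symm, by simpa using hj⟩
    | i + 1, 0 =>
      exfalso
      apply hp.2
      rw [Walk.mem_support_iff_exists_getVert]
      exact ⟨i, by simpa [Walk.getVert_cons_succ] using hij, by simpa using hi⟩
    | i + 1, j + 1 =>
      have := ih hp.1 i j (by simpa using hi) (by simpa using hj)
        (by simpa [Walk.getVert_cons_succ] using hij)
      omega

/-- If `G` has a cluster vertex deletion set `X` of size at most `k` (every
component of `G − X` is a clique), then every connected component of `G` has
diameter at most `3k+1`. -/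
theorem stmt_7 {V : Type*} (G : SimpleGraph V) (k : ℕ) (X : Set V)
    (hX : X.Finite) (hXcard : X.ncard ≤ k)
    (hclusters : ∀ u v : ↥(Xᶜ), (G.induce Xᶜ).Reachable u v →
      u = v ∨ (G.induce Xᶜ).Adj u v) :
    ∀ u v : V, G.Reachable u v → G.dist u v ≤ 3 * k + 1 := by
  classical
  intro u v huv
  obtain ⟨p, hp, hlen⟩ := huv.exists_path_of_dist
  rw [← hlen]
  by_contra hcon
  push_neg at hcon
  have H3 : ∀ i, i + 2 ≤ p.length →
      p.getVert i ∈ X ∨ p.getVert (i+1) ∈ X ∨ p.getVert (i+2) ∈ X := by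
    intro i hi
    by_contra hx
    push_neg at hx
    obtain ⟨ha, hb, hc⟩ := hx
    have hab : G.Adj (p.getVert i) (p.getVert (i+1)) := p.adj_getVert_succ (by omega)
    have hbc : G.Adj (p.getVert (i+1)) (p.getVert (i+1+1)) := p.adj_getVert_succ (by omega)
    have hbc' : G.Adj (p.getVert (i+1)) (p.getVert (i+2)) := by
      convert hbc using 2
    have h1 : (G.induce Xᶜ).Adj ⟨_, ha⟩ ⟨_, hb⟩ := by simp [hab]
    have h2 : (G.induce Xᶜ).Adj ⟨_, hb⟩ ⟨_, hc⟩ := by simp [hbc']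
    have hr : (G.induce Xᶜ).Reachable ⟨_, ha⟩ ⟨_, hc⟩ := h1.reachable.trans h2.reachable
    rcases hclusters _ _ hr with heq | hadj
    · have heq' : p.getVert i = p.getVert (i+2) := congrArg Subtype.val heq
      have := getVert_inj hp i (i+2) (by omega) (by omega) heq'
      omega
    · have hac : G.Adj (p.getVert i) (p.getVert (i+2)) := by simpa using hadj
      obtain ⟨q1, hq1⟩ := exists_take p i (by omega)
      obtain ⟨q2, hq2⟩ := exists_drop p (i+2)
      have hd := SimpleGraph.dist_le (q1.append (Walk.cons hac q2))
      rw [Walk.length_append, Walk.length_cons, hq1, hq2, hlen] at hd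
      omega
  have hpick : ∀ j : Fin (k+1), ∃ i, 3*(j:ℕ) ≤ i ∧ i ≤ 3*(j:ℕ)+2 ∧ p.getVert i ∈ X := by
    intro j
    have hj2 : 3*(j:ℕ)+2 ≤ p.length := by have := j.2; omega
    rcases H3 (3*(j:ℕ)) hj2 with h|h|h
    · exact ⟨3*(j:ℕ), le_refl _, by omega, h⟩
    · exact ⟨3*(j:ℕ)+1, by omega, by omega, h⟩
    · exact ⟨3*(j:ℕ)+2, by omega, by omega, h⟩
  choose f hf1 hf2 hf3 using hpick
  have hinj : Function.Injective (fun j => p.getVert (f j)) := by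
    intro j1 j2 h
    have hle1 : f j1 ≤ p.length := le_trans (hf2 j1) (by have := j1.2; omega)
    have hle2 : f j2 ≤ p.length := le_trans (hf2 j2) (by have := j2.2; omega)
    have hi := getVert_inj hp (f j1) (f j2) hle1 hle2 h
    have h11 := hf1 j1; have h12 := hf2 j1; have h21 := hf1 j2; have h22 := hf2 j2
    have : (j1 : ℕ) = (j2 : ℕ) := by omega
    exact Fin.ext this
  have hsub : (Finset.univ.image (fun j : Fin (k+1) => p.getVert (f j))) ⊆ hX.toFinset := by
    intro x hx
    simp only [Finset.mem_image, Finset.mem_univ, true_and] at hx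
    obtain ⟨j, rfl⟩ := hx
    simpa using hf3 j
  have hcard := Finset.card_le_card hsub
  rw [Finset.card_image_of_injective _ hinj, Finset.card_univ, Fintype.card_fin,
    ← Set.ncard_eq_toFinset_card X hX] at hcard
  omega
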